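/- Price stays above production cost: under the standing assumptions ((P(X₀)-c)h > (r+δ)α and existence of t₀ with h∫_{t₀}^T e^{-(r+δ)(s-t₀)}(P(X₀e^{-δs})-c) ds > α), the solution (X,u) of the forward-backward system satisfies P(X(t)) ≥ c for all t ∈ [0,T]. -/

import Mathlib

open Set Real intervalIntegral
open Filter Topology

def IsForwardSol (δ β r h α c : ℝ) (P : ℝ → ℝ) (T : ℝ) (X u : ℝ → ℝ) : Prop :=
  ∀ t ∈ Set.Icc (0 : ℝ) T,
    HasDerivAt X (-δ * X t + (1 / β) * max (u t - α) 0) t ∧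
    HasDerivAt u ((r + δ) * u t - (P (X t) - c) * h) t

set_option maxHeartbeats 1600000 in
/-- Under the standing assumptions, the price stays above the marginal
production cost along the equilibrium trajectory: `P(X(t)) ≥ c` on `[0,T]`. -/
theorem stmt_10 (δ β r h T α c X₀ : ℝ) (hδ : 0 < δ) (hβ : 0 < β) (hr : 0 < r)
    (hh : 0 < h) (hT : 0 < T) (hα : 0 < α) (hX₀ : 0 ≤ X₀)
    (P : ℝ → ℝ) (hP : ∃ L : NNReal, LipschitzWith L P) (hPdec : StrictAnti P)
    (hassum1 : (P X₀ - c) * h > (r + δ) * α)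
    (hassum2 : ∃ t₀ ∈ Set.Icc (0 : ℝ) T,
      h * ∫ s in t₀..T,
        Real.exp (-(r + δ) * (s - t₀)) * (P (X₀ * Real.exp (-δ * s)) - c) > α)
    (X u : ℝ → ℝ)
    (hsol : IsForwardSol δ β r h α c P T X u)
    (hX0 : X 0 = X₀) (huT : u T = 0) :
    ∀ t ∈ Set.Icc (0 : ℝ) T, c ≤ P (X t) := by
  by_contra hcon
  push_neg at hcon
  obtain ⟨t₁, ⟨ht₁0, ht₁T⟩, ht₁⟩ := hcon
  obtain ⟨L, hL⟩ := hP
  have hPcont : Continuous P := hL.continuous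
  have hXd : ∀ t ∈ Icc (0:ℝ) T, HasDerivAt X (-δ * X t + (1 / β) * max (u t - α) 0) t :=
    fun t ht => (hsol t ht).1
  have hud : ∀ t ∈ Icc (0:ℝ) T, HasDerivAt u ((r + δ) * u t - (P (X t) - c) * h) t :=
    fun t ht => (hsol t ht).2
  have hXco : ContinuousOn X (Icc 0 T) := fun t ht => ((hXd t ht).continuousAt).continuousWithinAt
  have hfco : ContinuousOn (fun t => P (X t)) (Icc 0 T) := hPcont.comp_continuousOn hXco
  have hrδα : 0 < (r + δ) * α := mul_pos (by linarith) hα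
  have hf0 : c < P (X 0) := by rw [hX0]; nlinarith
  -- X ≥ 0 on [0,T] via monotonicity of X t * exp (δ t)
  have hZd : ∀ x ∈ Icc (0:ℝ) T, HasDerivAt (fun t => X t * Real.exp (δ * t))
      (Real.exp (δ * x) * ((1 / β) * max (u x - α) 0)) x := by
    intro x hx
    have he : HasDerivAt (fun t => Real.exp (δ * t)) (Real.exp (δ * x) * δ) x := by
      simpa using (HasDerivAt.exp ((hasDerivAt_id x).const_mul δ))
    have hm := (hXd x hx).mul he
    exact hm.congr_deriv (by ring)
  have hZco : ContinuousOn (fun t => X t * Real.exp (δ * t)) (Icc 0 T) :=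
    hXco.mul ((Real.continuous_exp.comp (continuous_const.mul continuous_id)).continuousOn)
  have hZmono : MonotoneOn (fun t => X t * Real.exp (δ * t)) (Icc 0 T) := by
    apply monotoneOn_of_deriv_nonneg (convex_Icc 0 T) hZco
    · intro x hx
      rw [interior_Icc] at hx
      exact (hZd x (Ioo_subset_Icc_self hx)).differentiableAt.differentiableWithinAt
    · intro x hx
      rw [interior_Icc] at hx
      rw [(hZd x (Ioo_subset_Icc_self hx)).deriv]
      have h1 : (0:ℝ) ≤ max (u x - α) 0 := le_max_right _ _
      have h2 : (0:ℝ) < Real.exp (δ * x) := Real.exp_pos _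
      have h3 : (0:ℝ) < 1 / β := one_div_pos.2 hβ
      exact mul_nonneg h2.le (mul_nonneg h3.le h1)
  have hXnn : ∀ t ∈ Icc (0:ℝ) T, 0 ≤ X t := by
    intro t ht
    have h0 : (0:ℝ) ∈ Icc (0:ℝ) T := ⟨le_refl _, hT.le⟩
    have hm := hZmono h0 ht ht.1
    simp only [mul_zero, Real.exp_zero, mul_one, hX0] at hm
    nlinarith [Real.exp_pos (δ * t)]
  -- the time a : last time before t₁ with P (X t) ≥ c
  have hsub1 : Icc (0:ℝ) t₁ ⊆ Icc 0 T := Icc_subset_Icc le_rfl ht₁T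
  have hAclosed : IsClosed {t | t ∈ Icc (0:ℝ) t₁ ∧ c ≤ P (X t)} := by
    have hEq : {t | t ∈ Icc (0:ℝ) t₁ ∧ c ≤ P (X t)}
        = Icc 0 t₁ ∩ (fun t => P (X t)) ⁻¹' Ici c := by
      ext t; simp only [Set.mem_setOf_eq, Set.mem_inter_iff, Set.mem_preimage, Set.mem_Ici]
    rw [hEq]
    exact ContinuousOn.preimage_isClosed_of_isClosed (hfco.mono hsub1) isClosed_Icc isClosed_Ici
  have hAne : ({t | t ∈ Icc (0:ℝ) t₁ ∧ c ≤ P (X t)}).Nonempty := ⟨0, ⟨le_refl 0, ht₁0⟩, hf0.le⟩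
  have hAbdd : BddAbove {t | t ∈ Icc (0:ℝ) t₁ ∧ c ≤ P (X t)} := ⟨t₁, fun x hx => hx.1.2⟩
  set a := sSup {t | t ∈ Icc (0:ℝ) t₁ ∧ c ≤ P (X t)} with ha_def
  have haA : a ∈ {t | t ∈ Icc (0:ℝ) t₁ ∧ c ≤ P (X t)} := hAclosed.csSup_mem hAne hAbdd
  obtain ⟨⟨ha0, hat₁⟩, hfa_ge⟩ := haA
  have hat₁' : a < t₁ := lt_of_le_of_ne hat₁ (fun he => by rw [he] at hfa_ge; linarith)
  have haT : a ≤ T := hat₁.trans ht₁T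
  have haI : a ∈ Icc (0:ℝ) T := ⟨ha0, haT⟩
  have hflt1 : ∀ t ∈ Ioc a t₁, P (X t) < c := by
    intro t ht
    by_contra hge
    push_neg at hge
    have hle : t ≤ a := le_csSup hAbdd ⟨⟨ha0.trans ht.1.le, ht.2⟩, hge⟩
    exact absurd ht.1 (not_lt.2 hle)
  have hfa : P (X a) = c := by
    refine le_antisymm ?_ hfa_ge
    haveI hne : (𝓝[Ioo a t₁] a).NeBot := by
      refine mem_closure_iff_nhdsWithin_neBot.1 ?_
      rw [closure_Ioo (ne_of_lt hat₁')]
      exact ⟨le_refl a, hat₁'.le⟩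
    have htd : Filter.Tendsto (fun t => P (X t)) (𝓝[Ioo a t₁] a) (𝓝 (P (X a))) :=
      (hfco a haI).mono (fun z hz => ⟨ha0.trans hz.1.le, hz.2.le.trans ht₁T⟩)
    exact le_of_tendsto htd (eventually_mem_nhdsWithin.mono
      (fun t ht => (hflt1 t (Ioo_subset_Ioc_self ht)).le))
  have hXat₁ : X a < X t₁ := hPdec.lt_iff_gt.1 (by rw [hfa]; exact ht₁)
  by_cases hB : ∃ s ∈ Ioc t₁ T, c ≤ P (X s)
  · -- Case B : the price comes back to c at some later time b
    obtain ⟨s₀, hs₀, hfs₀⟩ := hB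
    have hsub2 : Icc t₁ T ⊆ Icc (0:ℝ) T := Icc_subset_Icc ht₁0 le_rfl
    have hBclosed : IsClosed {t | t ∈ Icc t₁ T ∧ c ≤ P (X t)} := by
      have hEq : {t | t ∈ Icc t₁ T ∧ c ≤ P (X t)}
          = Icc t₁ T ∩ (fun t => P (X t)) ⁻¹' Ici c := by
        ext t; simp only [Set.mem_setOf_eq, Set.mem_inter_iff, Set.mem_preimage, Set.mem_Ici]
      rw [hEq]
      exact ContinuousOn.preimage_isClosed_of_isClosed (hfco.mono hsub2) isClosed_Icc isClosed_Ici
    have hBne : ({t | t ∈ Icc t₁ T ∧ c ≤ P (X t)}).Nonempty := ⟨s₀, ⟨hs₀.1.le, hs₀.2⟩, hfs₀⟩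
    have hBbdd : BddBelow {t | t ∈ Icc t₁ T ∧ c ≤ P (X t)} := ⟨t₁, fun x hx => hx.1.1⟩
    set b := sInf {t | t ∈ Icc t₁ T ∧ c ≤ P (X t)} with hb_def
    have hbB : b ∈ {t | t ∈ Icc t₁ T ∧ c ≤ P (X t)} := hBclosed.csInf_mem hBne hBbdd
    obtain ⟨⟨hbt₁, hbT⟩, hfb⟩ := hbB
    have hbt₁' : t₁ < b := lt_of_le_of_ne hbt₁ (fun he => by rw [← he] at hfb; linarith)
    have hab : a < b := hat₁'.trans hbt₁'
    have hbI : b ∈ Icc (0:ℝ) T := ⟨ht₁0.trans hbt₁, hbT⟩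
    have hflt2 : ∀ t ∈ Ioo a b, P (X t) < c := by
      intro t ht
      rcases le_or_gt t t₁ with hc1 | hc1
      · exact hflt1 t ⟨ht.1, hc1⟩
      · by_contra hge
        push_neg at hge
        have hle : b ≤ t := csInf_le hBbdd ⟨⟨hc1.le, ht.2.le.trans hbT⟩, hge⟩
        exact absurd ht.2 (not_lt.2 hle)
    have hsubab : Icc a b ⊆ Icc (0:ℝ) T := Icc_subset_Icc ha0 hbT
    obtain ⟨tm, htmI, htmM⟩ :=
      isCompact_Icc.exists_isMaxOn (nonempty_Icc.2 hab.le) (hXco.mono hsubab)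
    have hXba : X b ≤ X a := by
      by_contra hlt
      push_neg at hlt
      have hm := hPdec hlt
      rw [hfa] at hm
      linarith
    have hXt₁tm : X t₁ ≤ X tm := isMaxOn_iff.1 htmM t₁ ⟨hat₁'.le, hbt₁'.le⟩
    have htma : a < tm := lt_of_le_of_ne htmI.1 (fun he => by rw [← he] at hXt₁tm; linarith)
    have htmb : tm < b := lt_of_le_of_ne htmI.2 (fun he => by rw [he] at hXt₁tm; linarith)
    have htmI' : tm ∈ Icc (0:ℝ) T := hsubab htmI
    have hXtm_pos : 0 < X tm := lt_of_le_of_lt (hXnn a haI) (lt_of_lt_of_le hXat₁ hXt₁tm)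
    have hloc : IsLocalMax X tm := htmM.isLocalMax (Icc_mem_nhds htma htmb)
    have hd0 : -δ * X tm + (1 / β) * max (u tm - α) 0 = 0 :=
      hloc.hasDerivAt_eq_zero (hXd tm htmI')
    have hmax : max (u tm - α) 0 = β * δ * X tm := by
      have h1 : (1 / β) * max (u tm - α) 0 = δ * X tm := by linarith
      have h2 : β * ((1 / β) * max (u tm - α) 0) = β * (δ * X tm) := by rw [h1]
      field_simp at h2
      linarith
    have hutm : u tm - α = β * δ * X tm := by
      rcases le_or_gt (u tm - α) 0 with hle | hlt
      · rw [max_eq_right hle] at hmax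
        nlinarith [mul_pos (mul_pos hβ hδ) hXtm_pos]
      · rwa [max_eq_left hlt.le] at hmax
    set k := fun t => u t - α - β * δ * X t with hk_def
    have hktm : k tm = 0 := by simp only [hk_def]; linarith
    have hkd : ∀ x ∈ Icc (0:ℝ) T, HasDerivAt k
        (((r + δ) * u x - (P (X x) - c) * h)
          - β * δ * (-δ * X x + (1 / β) * max (u x - α) 0)) x := by
      intro x hx
      exact ((hud x hx).sub_const α).sub ((hXd x hx).const_mul (β * δ))
    have hkcont : ContinuousOn k (Icc 0 T) :=
      fun t ht => ((hkd t ht).continuousAt).continuousWithinAt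
    have hkey : ∀ x ∈ Ico tm b, 0 ≤ k x →
        HasDerivAt k (r * u x + δ * α + β * δ * δ * X x - (P (X x) - c) * h) x ∧
        0 < r * u x + δ * α + β * δ * δ * X x - (P (X x) - c) * h := by
      intro x hx hkx
      have hxI : x ∈ Icc (0:ℝ) T := ⟨ha0.trans (htma.le.trans hx.1), hx.2.le.trans hbT⟩
      have hXx := hXnn x hxI
      simp only [hk_def] at hkx
      have hbdx : 0 ≤ β * δ * X x := mul_nonneg (mul_nonneg hβ.le hδ.le) hXx
      have hux : α ≤ u x := by linarith
      have hmaxx : max (u x - α) 0 = u x - α := max_eq_left (by linarith)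
      have hfx : P (X x) < c := hflt2 x ⟨htma.trans_le hx.1, hx.2⟩
      constructor
      · have hder := hkd x hxI
        rw [hmaxx] at hder
        convert hder using 1
        field_simp
        ring
      · have e1 : r * α ≤ r * u x := mul_le_mul_of_nonneg_left hux hr.le
        have e2 : 0 ≤ β * δ * δ * X x :=
          mul_nonneg (mul_nonneg (mul_nonneg hβ.le hδ.le) hδ.le) hXx
        have e3 : 0 < (c - P (X x)) * h := mul_pos (sub_pos.2 hfx) hh
        nlinarith [mul_pos hr hα, mul_pos hδ hα]
    set S := {t | t ∈ Icc tm b ∧ ∀ s ∈ Icc tm t, 0 ≤ k s} with hS_def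
    have hSne : tm ∈ S := by
      refine ⟨⟨le_refl tm, htmb.le⟩, fun s hs => ?_⟩
      have hs' : s = tm := le_antisymm hs.2 hs.1
      rw [hs', hktm]
    have hSbdd : BddAbove S := ⟨b, fun x hx => hx.1.2⟩
    set c₀ := sSup S with hc₀_def
    have htmc₀ : tm ≤ c₀ := le_csSup hSbdd hSne
    have hc₀b : c₀ ≤ b := csSup_le ⟨tm, hSne⟩ (fun x hx => hx.1.2)
    have hc₀I : c₀ ∈ Icc (0:ℝ) T := ⟨ha0.trans (htma.le.trans htmc₀), hc₀b.trans hbT⟩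
    have hkIco : ∀ s ∈ Ico tm c₀, 0 ≤ k s := by
      intro s hs
      obtain ⟨t', ht'S, hst'⟩ := exists_lt_of_lt_csSup ⟨tm, hSne⟩ hs.2
      exact ht'S.2 s ⟨hs.1, hst'.le⟩
    have hkc₀ : 0 ≤ k c₀ := by
      rcases eq_or_lt_of_le htmc₀ with he | hlt
      · rw [← he, hktm]
      · haveI hne : (𝓝[Ico tm c₀] c₀).NeBot := by
          refine mem_closure_iff_nhdsWithin_neBot.1 ?_
          rw [closure_Ico (ne_of_lt hlt)]
          exact ⟨htmc₀, le_refl _⟩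
        have htd : Filter.Tendsto k (𝓝[Ico tm c₀] c₀) (𝓝 (k c₀)) :=
          (hkcont c₀ hc₀I).mono (fun z hz =>
            ⟨ha0.trans (htma.le.trans hz.1), hz.2.le.trans (hc₀b.trans hbT)⟩)
        exact ge_of_tendsto htd (eventually_mem_nhdsWithin.mono fun z hz => hkIco z hz)
    have hkIcc : ∀ s ∈ Icc tm c₀, 0 ≤ k s := by
      intro s hs
      rcases eq_or_lt_of_le hs.2 with he | hlt
      · rw [he]; exact hkc₀
      · exact hkIco s ⟨hs.1, hlt⟩
    have hc₀eq : c₀ = b := by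
      by_contra hne
      have hc₀b' : c₀ < b := lt_of_le_of_ne hc₀b hne
      obtain ⟨hkd₀, hDpos⟩ := hkey c₀ ⟨htmc₀, hc₀b'⟩ hkc₀
      have hslope : Filter.Tendsto (slope k c₀) (𝓝[>] c₀)
          (𝓝 (r * u c₀ + δ * α + β * δ * δ * X c₀ - (P (X c₀) - c) * h)) :=
        (hasDerivAt_iff_tendsto_slope.1 hkd₀).mono_left
          (nhdsWithin_mono c₀ fun z hz => ne_of_gt hz)
      have hev : ∀ᶠ z in 𝓝[>] c₀, 0 < slope k c₀ z :=
        hslope.eventually (eventually_gt_nhds hDpos)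
      obtain ⟨v, hvc₀, hsubv⟩ := mem_nhdsGT_iff_exists_Ioo_subset.1 hev
      have hvc₀' : c₀ < v := hvc₀
      set t' := min b ((c₀ + v) / 2) with ht'def
      have ht'c₀ : c₀ < t' := lt_min hc₀b' (by linarith)
      have ht'v : t' < v := lt_of_le_of_lt (min_le_right _ _) (by linarith)
      have ht'b : t' ≤ b := min_le_left _ _
      have ht'S : t' ∈ S := by
        refine ⟨⟨htmc₀.trans ht'c₀.le, ht'b⟩, fun s hs => ?_⟩
        rcases le_or_gt s c₀ with hsc | hsc
        · exact hkIcc s ⟨hs.1, hsc⟩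
        · have hsmem : s ∈ Ioo c₀ v := ⟨hsc, lt_of_le_of_lt hs.2 ht'v⟩
          have hsl : 0 < slope k c₀ s := hsubv hsmem
          rw [slope_def_field] at hsl
          have hden : (0:ℝ) < s - c₀ := sub_pos.2 hsc
          have heq : (k s - k c₀) / (s - c₀) * (s - c₀) = k s - k c₀ :=
            div_mul_cancel₀ _ (ne_of_gt hden)
          have hpos := mul_pos hsl hden
          rw [heq] at hpos
          linarith
      have hle := le_csSup hSbdd ht'S
      linarith
    have hkb : ∀ s ∈ Icc tm b, 0 ≤ k s := by rw [← hc₀eq]; exact hkIcc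
    have hXmono : MonotoneOn X (Icc tm b) := by
      have hsubtm : Icc tm b ⊆ Icc (0:ℝ) T :=
        Icc_subset_Icc (ha0.trans htma.le) hbT
      apply monotoneOn_of_deriv_nonneg (convex_Icc tm b) (hXco.mono hsubtm)
      · intro x hx
        rw [interior_Icc] at hx
        exact (hXd x (hsubtm (Ioo_subset_Icc_self hx))).differentiableAt.differentiableWithinAt
      · intro x hx
        rw [interior_Icc] at hx
        have hxI : x ∈ Icc (0:ℝ) T := hsubtm (Ioo_subset_Icc_self hx)
        rw [(hXd x hxI).deriv]
        have hkx : 0 ≤ k x := hkb x (Ioo_subset_Icc_self hx)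
        simp only [hk_def] at hkx
        have hXx := hXnn x hxI
        have hbdx : 0 ≤ β * δ * X x := mul_nonneg (mul_nonneg hβ.le hδ.le) hXx
        have hmaxx : max (u x - α) 0 = u x - α := max_eq_left (by linarith)
        rw [hmaxx]
        have h1β : (0:ℝ) < 1 / β := one_div_pos.2 hβ
        have hmul : 1 / β * (β * δ * X x) ≤ 1 / β * (u x - α) :=
          mul_le_mul_of_nonneg_left (by linarith) h1β.le
        have hid : 1 / β * (β * δ * X x) = δ * X x := by field_simp
        linarith
    have hfinal : X tm ≤ X b := hXmono ⟨le_refl tm, htmb.le⟩ ⟨htmb.le, le_refl b⟩ htmb.le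
    linarith
  · -- Case A : the price stays below c for all times after a
    push_neg at hB
    have hflt : ∀ t ∈ Ioc a T, P (X t) < c := by
      intro t ht
      rcases le_or_gt t t₁ with hc1 | hc1
      · exact hflt1 t ⟨ht.1, hc1⟩
      · exact hB t ⟨hc1, ht.2⟩
    have haT' : a < T := hat₁'.trans_le ht₁T
    have hwd : ∀ x ∈ Icc (0:ℝ) T, HasDerivAt (fun t => u t * Real.exp (-(r + δ) * t))
        (Real.exp (-(r + δ) * x) * ((c - P (X x)) * h)) x := by
      intro x hx
      have he : HasDerivAt (fun t => Real.exp (-(r + δ) * t))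
          (Real.exp (-(r + δ) * x) * (-(r + δ))) x := by
        simpa using (HasDerivAt.exp ((hasDerivAt_id x).const_mul (-(r + δ))))
      have hm := (hud x hx).mul he
      exact hm.congr_deriv (by ring)
    have hsubaT : Icc a T ⊆ Icc (0:ℝ) T := Icc_subset_Icc ha0 le_rfl
    have hwmono : StrictMonoOn (fun t => u t * Real.exp (-(r + δ) * t)) (Icc a T) := by
      apply strictMonoOn_of_deriv_pos (convex_Icc a T)
      · exact fun t ht => ((hwd t (hsubaT ht)).continuousAt).continuousWithinAt
      · intro x hx
        rw [interior_Icc] at hx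
        rw [(hwd x (hsubaT (Ioo_subset_Icc_self hx))).deriv]
        have hfx : P (X x) < c := hflt x ⟨hx.1, hx.2.le⟩
        have hex : (0:ℝ) < Real.exp (-(r + δ) * x) := Real.exp_pos _
        exact mul_pos hex (mul_pos (sub_pos.2 hfx) hh)
    have huneg : ∀ t ∈ Ico a T, u t < 0 := by
      intro t ht
      have hm := hwmono ⟨ht.1, ht.2.le⟩ ⟨haT'.le, le_refl T⟩ ht.2
      simp only [huT, zero_mul] at hm
      nlinarith [Real.exp_pos (-(r + δ) * t)]
    have hZconst : ∀ x ∈ Icc a T,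
        X x * Real.exp (δ * x) = X a * Real.exp (δ * a) := by
      apply constant_of_has_deriv_right_zero (hZco.mono hsubaT)
      intro x hx
      have hxI : x ∈ Icc (0:ℝ) T := hsubaT ⟨hx.1, hx.2.le⟩
      have hmax0 : max (u x - α) 0 = 0 := max_eq_right (by linarith [huneg x hx])
      have hd := hZd x hxI
      rw [hmax0] at hd
      simp only [mul_zero] at hd
      exact hd.hasDerivWithinAt
    have hZt₁ := hZconst t₁ ⟨hat₁'.le, ht₁T⟩
    have hXa := hXnn a haI
    have he1 : Real.exp (δ * a) ≤ Real.exp (δ * t₁) := Real.exp_le_exp.2 (by nlinarith)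
    nlinarith [mul_pos (sub_pos.2 hXat₁) (Real.exp_pos (δ * a)),
      mul_nonneg (le_trans hXa hXat₁.le) (sub_nonneg.2 he1)]
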